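/- If G is a simple connected graph with n vertices, then the optimal rubbling number satisfies ρ_opt(G) ≤ ⌈(n + 1)/2⌉. -/

import Mathlib

open Finset

variable {V : Type*}

/-- A pebbling move: remove two pebbles at a vertex `v` and add one pebble at an
adjacent vertex `u`. -/
def IsPebblingMove (G : SimpleGraph V) (p p' : V → ℕ) : Prop :=
  ∃ v u, G.Adj v u ∧ 2 ≤ p v ∧
    p' v = p v - 2 ∧ p' u = p u + 1 ∧ ∀ z, z ≠ v → z ≠ u → p' z = p z

/-- A strict rubbling move: remove one pebble each at distinct vertices `v` and `w`,
both adjacent to `u`, and add one pebble at `u`. -/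
def IsStrictRubblingMove (G : SimpleGraph V) (p p' : V → ℕ) : Prop :=
  ∃ v w u, v ≠ w ∧ G.Adj v u ∧ G.Adj w u ∧ 1 ≤ p v ∧ 1 ≤ p w ∧
    p' v = p v - 1 ∧ p' w = p w - 1 ∧ p' u = p u + 1 ∧
    ∀ z, z ≠ v → z ≠ w → z ≠ u → p' z = p z

/-- A rubbling move is a pebbling move or a strict rubbling move. -/
def IsRubblingMove (G : SimpleGraph V) (p p' : V → ℕ) : Prop :=
  IsPebblingMove G p p' ∨ IsStrictRubblingMove G p p'

/-- A vertex `x` is reachable from the pebble distribution `p` if some executable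
sequence of rubbling moves leads to a distribution with a pebble on `x`. -/
def RubblingReachable (G : SimpleGraph V) (p : V → ℕ) (x : V) : Prop :=
  ∃ q : V → ℕ, Relation.ReflTransGen (IsRubblingMove G) p q ∧ 1 ≤ q x

/-- The rubbling number: the least `m` such that every vertex is reachable from
every pebble distribution of size `m`. -/
noncomputable def rubblingNumber (G : SimpleGraph V) [Fintype V] : ℕ :=
  sInf {m | ∀ p : V → ℕ, ∑ v, p v = m → ∀ x, RubblingReachable G p x}

/-- The optimal rubbling number: the least size of a pebble distribution from which
every vertex is reachable. -/
noncomputable def optimalRubblingNumber (G : SimpleGraph V) [Fintype V] : ℕ :=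
  sInf {m | ∃ p : V → ℕ, ∑ v, p v = m ∧ ∀ x, RubblingReachable G p x}

namespace RubblingAux

variable {G : SimpleGraph V}

lemma move_add {p q : V → ℕ} (r : V → ℕ) (h : IsRubblingMove G p q) :
    IsRubblingMove G (fun z => p z + r z) (fun z => q z + r z) := by
  rcases h with ⟨v, u, hadj, h2, hv, hu, ho⟩ | ⟨v, w, u, hvw, hav, haw, hv1, hw1, hqv, hqw, hqu, ho⟩
  · refine Or.inl ⟨v, u, hadj, by show 2 ≤ p v + r v; omega, by show q v + r v = p v + r v - 2; omega,
      by show q u + r u = p u + r u + 1; omega, ?_⟩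
    intro z hzv hzu
    show q z + r z = p z + r z
    rw [ho z hzv hzu]
  · refine Or.inr ⟨v, w, u, hvw, hav, haw, by show 1 ≤ p v + r v; omega,
      by show 1 ≤ p w + r w; omega, by show q v + r v = p v + r v - 1; omega,
      by show q w + r w = p w + r w - 1; omega,
      by show q u + r u = p u + r u + 1; omega, ?_⟩
    intro z h1 h2 h3
    show q z + r z = p z + r z
    rw [ho z h1 h2 h3]

lemma rtg_add {p q : V → ℕ} (r : V → ℕ)
    (h : Relation.ReflTransGen (IsRubblingMove G) p q) :
    Relation.ReflTransGen (IsRubblingMove G) (fun z => p z + r z) (fun z => q z + r z) :=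
  Relation.ReflTransGen.lift (fun f : V → ℕ => fun z => f z + r z) (fun _ _ hab => move_add r hab) _ _ h

lemma reach_add {p : V → ℕ} {x : V} (r : V → ℕ) (h : RubblingReachable G p x) :
    RubblingReachable G (fun z => p z + r z) x := by
  obtain ⟨q, hq, hx⟩ := h
  exact ⟨fun z => q z + r z, rtg_add r hq, by show 1 ≤ q x + r x; omega⟩

/-- reach `u` given ability to collect two pebbles at a neighbor `v`. -/
lemma reach_of_two {p : V → ℕ} {v u : V} (hadj : G.Adj v u)
    (h : ∃ q, Relation.ReflTransGen (IsRubblingMove G) p q ∧ 2 ≤ q v) :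
    RubblingReachable G p u := by
  classical
  obtain ⟨q, hq, h2⟩ := h
  refine ⟨fun z => if z = v then q v - 2 else if z = u then q u + 1 else q z,
    hq.tail (Or.inl ⟨v, u, hadj, h2, by simp, ?_, ?_⟩), ?_⟩
  · simp [hadj.ne']
  · intro z h1 h2'
    simp [h1, h2']
  · simp [hadj.ne']

/-- reach `x` given pebbles on two distinct neighbors `u ≠ w`. -/
lemma reach_of_nbrs {p : V → ℕ} {u w x : V} (huw : u ≠ w) (h1 : G.Adj u x) (h2 : G.Adj w x)
    (h : ∃ q, Relation.ReflTransGen (IsRubblingMove G) p q ∧ 1 ≤ q u ∧ 1 ≤ q w) :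
    RubblingReachable G p x := by
  classical
  obtain ⟨q, hq, hu, hw⟩ := h
  refine ⟨fun z => if z = u then q u - 1 else if z = w then q w - 1 else
      if z = x then q x + 1 else q z,
    hq.tail (Or.inr ⟨u, w, x, huw, h1, h2, hu, hw, by simp, ?_, ?_, ?_⟩), ?_⟩
  · simp [huw.symm]
  · simp [h1.ne', h2.ne']
  · intro z hz1 hz2 hz3
    simp [hz1, hz2, hz3]
  · simp [h1.ne', h2.ne']

end RubblingAux

open SimpleGraph Walk

variable {G : SimpleGraph V}

namespace RubblingAux

def WalkIn (G : SimpleGraph V) (S : Finset V) (a b : V) : Prop :=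
  ∃ w : G.Walk a b, ∀ z ∈ w.support, z ∈ S

def ConnOn (G : SimpleGraph V) (S : Finset V) : Prop :=
  ∀ a ∈ S, ∀ b ∈ S, WalkIn G S a b

lemma WalkIn.symm {S : Finset V} {a b : V} (h : WalkIn G S a b) : WalkIn G S b a := by
  obtain ⟨w, hw⟩ := h
  exact ⟨w.reverse, fun z hz => hw z (by rwa [support_reverse, List.mem_reverse] at hz)⟩

lemma WalkIn.trans {S : Finset V} {a b c : V} (h1 : WalkIn G S a b) (h2 : WalkIn G S b c) :
    WalkIn G S a c := by
  obtain ⟨w1, hw1⟩ := h1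
  obtain ⟨w2, hw2⟩ := h2
  refine ⟨w1.append w2, fun z hz => ?_⟩
  rw [mem_support_append_iff] at hz
  exact hz.elim (hw1 z) (hw2 z)

lemma seg [DecidableEq V] {a b x y : V} (W : G.Walk a b) (hx : x ∈ W.support)
    (hy : y ∈ W.support) :
    ∃ Z : G.Walk x y, ∀ z ∈ Z.support, z ∈ W.support := by
  refine ⟨(W.takeUntil x hx).reverse.append (W.takeUntil y hy), fun z hz => ?_⟩
  rw [mem_support_append_iff] at hz
  rcases hz with hz | hz
  · rw [support_reverse, List.mem_reverse] at hz
    exact W.support_takeUntil_subset hx hz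
  · exact W.support_takeUntil_subset hy hz

lemma path_head {x a : V} (R : G.Walk x a) (hR : R.IsPath) (hxa : x ≠ a) :
    ∃ (s : V) (_ : G.Adj x s) (W : G.Walk s a), x ∉ W.support ∧
      R.support = x :: W.support := by
  cases R with
  | nil => exact absurd rfl hxa
  | @cons _ s _ h W =>
      have hnd : (Walk.cons h W).support.Nodup := (Walk.isPath_def _).mp hR
      rw [support_cons] at hnd
      exact ⟨s, h, W, (List.nodup_cons.mp hnd).1, support_cons _ _⟩

lemma exists_max_path [Fintype V] (S : Finset V) (hSne : S.Nonempty) :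
    ∃ (x y : V) (P : G.Walk x y), P.IsPath ∧ (∀ z ∈ P.support, z ∈ S) ∧
      ∀ (a b : V) (W : G.Walk a b), W.IsPath → (∀ z ∈ W.support, z ∈ S) →
        W.length ≤ P.length := by
  classical
  obtain ⟨x0, hx0⟩ := hSne
  set T : Set ℕ := {k | ∃ (a b : V) (W : G.Walk a b), W.IsPath ∧ (∀ z ∈ W.support, z ∈ S) ∧
    W.length = k} with hT
  have hTne : T.Nonempty := ⟨0, x0, x0, Walk.nil, Walk.IsPath.nil, by
    intro z hz
    rw [support_nil, List.mem_singleton] at hz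
    exact hz ▸ hx0, rfl⟩
  have hbdd : BddAbove T := by
    refine ⟨S.card, fun k hk => ?_⟩
    obtain ⟨a, b, W, hW, hWS, hWk⟩ := hk
    have hnd : W.support.Nodup := (Walk.isPath_def _).mp hW
    have hsub : W.support.toFinset ⊆ S := by
      intro z hz
      rw [List.mem_toFinset] at hz
      exact hWS z hz
    have hcard : W.support.toFinset.card = W.support.length := List.toFinset_card_of_nodup hnd
    have hlen : W.support.length = W.length + 1 := W.length_support
    have := Finset.card_le_card hsub
    omega
  obtain ⟨a, b, W, hW, hWS, hWk⟩ := Nat.sSup_mem hTne hbdd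
  refine ⟨a, b, W, hW, hWS, fun c d Z hZ hZS => ?_⟩
  have : Z.length ∈ T := ⟨c, d, Z, hZ, hZS, rfl⟩
  have := le_csSup hbdd this
  omega

end RubblingAux

namespace RubblingAux

/-- If the only possible `S`-neighbor of `y` is `v`, then removing `y` keeps `S` connected. -/
lemma erase_connOn_of_unique_nbr [DecidableEq V] {S : Finset V} {y v : V}
    (hconn : ConnOn G S) (hNy : ∀ z ∈ S, G.Adj z y → z = v) :
    ConnOn G (S.erase y) := by
  intro a ha b hb
  obtain ⟨w, hw⟩ := hconn a (Finset.mem_of_mem_erase ha) b (Finset.mem_of_mem_erase hb)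
  have hRS : ∀ z ∈ w.bypass.support, z ∈ S := fun z hz => hw z (w.support_bypass_subset hz)
  set R := w.bypass with hRdef
  have hR : R.IsPath := w.bypass_isPath
  by_cases hy : y ∈ R.support
  · exfalso
    have hya : y ≠ a := fun h => (Finset.ne_of_mem_erase ha) h.symm
    have hyb : y ≠ b := fun h => (Finset.ne_of_mem_erase hb) h.symm
    -- take/drop decomposition of R around y
    have hspec : (R.takeUntil y hy).append (R.dropUntil y hy) = R := R.take_spec hy
    have hndR : R.support.Nodup := (Walk.isPath_def _).mp hR
    have hnd2 : ((R.takeUntil y hy).support ++ (R.dropUntil y hy).support.tail).Nodup := by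
      rw [← support_append, hspec]; exact hndR
    have hTpath : (R.takeUntil y hy).IsPath := hR.takeUntil hy
    have hDpath : (R.dropUntil y hy).IsPath := hR.dropUntil hy
    -- head of reversed takeUntil: the predecessor of y
    obtain ⟨s1, hs1adj, W1, hs1y, hs1sub⟩ :=
      path_head (R.takeUntil y hy).reverse hTpath.reverse hya
    have hs1T : s1 ∈ (R.takeUntil y hy).support := by
      have : s1 ∈ (R.takeUntil y hy).reverse.support := by
        rw [hs1sub]; exact List.mem_cons_of_mem _ W1.start_mem_support
      rwa [support_reverse, List.mem_reverse] at this
    have hs1S : s1 ∈ S := hRS _ (R.support_takeUntil_subset hy hs1T)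
    have hs1v : s1 = v := hNy s1 hs1S hs1adj.symm
    -- head of dropUntil: the successor of y
    obtain ⟨s2, hs2adj, W2, hs2y, hs2sub⟩ := path_head (R.dropUntil y hy) hDpath hyb
    have hs2D : s2 ∈ (R.dropUntil y hy).support := by
      rw [hs2sub]; exact List.mem_cons_of_mem _ W2.start_mem_support
    have hs2S : s2 ∈ S := hRS _ (R.support_dropUntil_subset hy hs2D)
    have hs2v : s2 = v := hNy s2 hs2S hs2adj.symm
    -- v appears both in takeUntil and in the tail of dropUntil: contradiction with Nodup
    have hv1 : v ∈ (R.takeUntil y hy).support := hs1v ▸ hs1T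
    have hv2 : v ∈ (R.dropUntil y hy).support.tail := by
      rw [hs2sub]
      exact hs2v ▸ W2.start_mem_support
    rw [List.nodup_append] at hnd2
    exact hnd2.2.2 v hv1 v hv2 rfl
  · exact ⟨R, fun z hz => Finset.mem_erase.mpr ⟨fun h => hy (h ▸ hz), hRS z hz⟩⟩

end RubblingAux

namespace RubblingAux

/-- Removing an endpoint `u` of a maximal path keeps `S` connected, provided all
`S`-neighbors of `u` lie on a subwalk `TL` avoiding `u`. -/
lemma erase_connOn_of_nbrs_in_tail [DecidableEq V] {S : Finset V} {u c d : V} (TL : G.Walk c d)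
    (hconn : ConnOn G S) (hTLS : ∀ z ∈ TL.support, z ∈ S) (huTL : u ∉ TL.support)
    (hNu : ∀ z ∈ S, G.Adj z u → z ∈ TL.support) : ConnOn G (S.erase u) := by
  intro a ha b hb
  obtain ⟨w, hw⟩ := hconn a (Finset.mem_of_mem_erase ha) b (Finset.mem_of_mem_erase hb)
  have hRS : ∀ z ∈ w.bypass.support, z ∈ S := fun z hz => hw z (w.support_bypass_subset hz)
  set R := w.bypass with hRdef
  have hR : R.IsPath := w.bypass_isPath
  by_cases hu : u ∈ R.support
  · have hua : u ≠ a := fun h => (Finset.ne_of_mem_erase ha) h.symm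
    have hub : u ≠ b := fun h => (Finset.ne_of_mem_erase hb) h.symm
    obtain ⟨s1, hs1adj, W1, hs1u, hs1sub⟩ :=
      path_head (R.takeUntil u hu).reverse (hR.takeUntil hu).reverse hua
    obtain ⟨s2, hs2adj, W2, hs2u, hs2sub⟩ :=
      path_head (R.dropUntil u hu) (hR.dropUntil hu) hub
    have hW1T : ∀ z ∈ W1.support, z ∈ (R.takeUntil u hu).support := by
      intro z hz
      have : z ∈ (R.takeUntil u hu).reverse.support := by
        rw [hs1sub]; exact List.mem_cons_of_mem _ hz
      rwa [support_reverse, List.mem_reverse] at this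
    have hW2D : ∀ z ∈ W2.support, z ∈ (R.dropUntil u hu).support := by
      intro z hz
      rw [hs2sub]; exact List.mem_cons_of_mem _ hz
    have hs1T : s1 ∈ TL.support :=
      hNu s1 (hRS _ (R.support_takeUntil_subset hu (hW1T s1 W1.start_mem_support))) hs1adj.symm
    have hs2T : s2 ∈ TL.support :=
      hNu s2 (hRS _ (R.support_dropUntil_subset hu (hW2D s2 W2.start_mem_support))) hs2adj.symm
    obtain ⟨Z, hZ⟩ := seg TL hs1T hs2T
    refine ⟨W1.reverse.append (Z.append W2), fun z hz => ?_⟩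
    rw [mem_support_append_iff] at hz
    rcases hz with hz | hz
    · rw [support_reverse, List.mem_reverse] at hz
      exact Finset.mem_erase.mpr ⟨fun h => hs1u (h ▸ hz),
        hRS _ (R.support_takeUntil_subset hu (hW1T z hz))⟩
    · rw [mem_support_append_iff] at hz
      rcases hz with hz | hz
      · exact Finset.mem_erase.mpr ⟨fun h => huTL (h ▸ hZ z hz), hTLS _ (hZ z hz)⟩
      · exact Finset.mem_erase.mpr ⟨fun h => hs2u (h ▸ hz),
          hRS _ (R.support_dropUntil_subset hu (hW2D z hz))⟩
  · exact ⟨R, fun z hz => Finset.mem_erase.mpr ⟨fun h => hu (h ▸ hz), hRS z hz⟩⟩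

end RubblingAux

namespace RubblingAux

set_option maxHeartbeats 2000000 in
lemma structural [Fintype V] [DecidableEq V] {S : Finset V} (hS : ConnOn G S)
    (h3 : 3 ≤ S.card) :
    (∃ u v w, u ∈ S ∧ v ∈ S ∧ w ∈ S ∧ w ≠ u ∧ w ≠ v ∧ u ≠ v ∧ u ≠ w ∧ G.Adj u v ∧ G.Adj w v ∧
      ConnOn G (S \ {u, v})) ∨
    (∃ u y v, u ∈ S ∧ y ∈ S ∧ u ≠ y ∧ v ∈ S ∧ v ≠ u ∧ v ≠ y ∧ G.Adj v u ∧ G.Adj v y ∧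
      ConnOn G (S \ {u, y})) := by
  obtain ⟨x0, xk, P, hPp, hPS, hPmax⟩ := exists_max_path (G := G) S
    (Finset.card_pos.mp (by omega))
  -- P has length at least 1
  have hk1 : 1 ≤ P.length := by
    have h2card : 1 < S.card := by omega
    obtain ⟨a0, ha0, b0, hb0, hab0⟩ := Finset.one_lt_card.mp h2card
    obtain ⟨w, hw⟩ := hS a0 ha0 b0 hb0
    have hQS : ∀ z ∈ w.bypass.support, z ∈ S := fun z hz => hw z (w.support_bypass_subset hz)
    have hle := hPmax a0 b0 w.bypass w.bypass_isPath hQS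
    cases hQ : w.bypass with
    | nil => exact absurd rfl hab0
    | cons h Q2 => rw [hQ] at hle; rw [length_cons] at hle; omega
  cases P with
  | nil => simp at hk1
  | @cons _ v _ h1 P1 =>
    cases P1 with
    | nil =>
      -- maximal path has length 1 : impossible since S has ≥ 3 vertices
      exfalso
      have hlen1 : (Walk.cons h1 (Walk.nil : G.Walk xk xk)).length = 1 := by simp
      have hx0S : x0 ∈ S := hPS x0 (by simp [support_cons])
      have hvS : xk ∈ S := hPS xk (by simp [support_cons])
      have hzex : ∃ z ∈ S, z ≠ x0 ∧ z ≠ xk := by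
        have hsub : ({x0, xk} : Finset V).card ≤ 2 := Finset.card_insert_le _ _ |>.trans
          (by simp)
        have hge : 1 ≤ (S \ {x0, xk}).card := by
          have := Finset.le_card_sdiff ({x0, xk} : Finset V) S
          omega
        obtain ⟨z, hz⟩ := Finset.card_pos.mp (by omega : 0 < (S \ {x0, xk}).card)
        rw [Finset.mem_sdiff] at hz
        refine ⟨z, hz.1, ?_, ?_⟩ <;> intro h <;> exact hz.2 (by simp [h])
      obtain ⟨z, hzS, hzx0, hzv⟩ := hzex
      obtain ⟨w, hw⟩ := hS z hzS x0 hx0S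
      have hQS : ∀ t ∈ w.bypass.support, t ∈ S := fun t ht => hw t (w.support_bypass_subset ht)
      have hle := hPmax z x0 w.bypass w.bypass_isPath hQS
      rw [hlen1] at hle
      cases hQ : w.bypass with
      | nil => exact hzx0 rfl
      | @cons _ m _ hzm Q2 =>
        cases Q2 with
        | nil =>
          -- so G.Adj z x0 ; extend the edge path x0—v by z
          have hzadj : G.Adj z x0 := hzm
          have hp1 : (Walk.cons h1 (Walk.nil : G.Walk xk xk)).IsPath := by
            rw [Walk.isPath_def]
            simp [support_cons, h1.ne]
          have hp2 : (Walk.cons hzadj (Walk.cons h1 (Walk.nil : G.Walk xk xk))).IsPath := by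
            refine hp1.cons ?_
            simp [support_cons, hzx0, hzv]
          have := hPmax z xk _ hp2 (by
            intro t ht
            simp only [support_cons, support_nil, List.mem_cons, List.mem_singleton] at ht
            rcases ht with rfl | rfl | rfl | h
            · exact hzS
            · exact hx0S
            · exact hvS
            · simp at h)
          rw [hlen1] at this
          simp [length_cons] at this
        | cons _ _ =>
          rw [hQ] at hle
          simp [length_cons] at hle
    | @cons _ p2 _ h2 Q' =>
      -- the main case: P = x0 — v — p2 — ⋯ — xk
      set TL := Walk.cons h2 Q' with hTLdef
      have hsupP : (Walk.cons h1 TL).support = x0 :: v :: Q'.support := by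
        simp [hTLdef, support_cons]
      have hnd : (x0 :: v :: Q'.support).Nodup := by
        rw [← hsupP]; exact (Walk.isPath_def _).mp hPp
      have hx0v : x0 ≠ v := h1.ne
      have hx0Q : x0 ∉ Q'.support := by
        have := (List.nodup_cons.mp hnd).1
        simp only [List.mem_cons] at this
        exact fun h => this (Or.inr h)
      have hvQ : v ∉ Q'.support := (List.nodup_cons.mp (List.nodup_cons.mp hnd).2).1
      have hndQ : Q'.support.Nodup := (List.nodup_cons.mp (List.nodup_cons.mp hnd).2).2
      have hx0S : x0 ∈ S := hPS x0 (by rw [hsupP]; simp)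
      have hvS : v ∈ S := hPS v (by rw [hsupP]; simp)
      have hQ'S : ∀ z ∈ Q'.support, z ∈ S := fun z hz => hPS z (by rw [hsupP]; simp [hz])
      have hp2S : p2 ∈ S := hQ'S p2 Q'.start_mem_support
      have hp2x0 : p2 ≠ x0 := fun h => hx0Q (h ▸ Q'.start_mem_support)
      have hp2v : p2 ≠ v := fun h => hvQ (h ▸ Q'.start_mem_support)
      have hPlen : (Walk.cons h1 TL).length = Q'.length + 2 := by
        simp [hTLdef, length_cons]
      have hsupTL : TL.support = v :: Q'.support := by simp [hTLdef, support_cons]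
      have hTLS : ∀ z ∈ TL.support, z ∈ S := by
        intro z hz
        rw [hsupTL] at hz
        rcases List.mem_cons.mp hz with rfl | hz
        · exact hvS
        · exact hQ'S z hz
      have huTL : x0 ∉ TL.support := by
        rw [hsupTL]
        simp only [List.mem_cons]
        rintro (rfl | h)
        · exact hx0v rfl
        · exact hx0Q h
      have hTLpath : TL.IsPath := hPp.of_cons
      have hNu : ∀ z ∈ S, G.Adj z x0 → z ∈ TL.support := by
        intro z hzS hzadj
        by_contra hzT
        have hzP : z ∉ (Walk.cons h1 TL).support := by
          rw [hsupP]
          simp only [List.mem_cons]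
          rintro (rfl | h)
          · exact hzadj.ne rfl
          · exact hzT (by rw [hsupTL]; exact List.mem_cons.mpr h)
        have hNPp : (Walk.cons hzadj (Walk.cons h1 TL)).IsPath := hPp.cons hzP
        have := hPmax z xk _ hNPp (by
          intro t ht
          rw [support_cons] at ht
          rcases List.mem_cons.mp ht with rfl | ht
          · exact hzS
          · exact hPS t ht)
        rw [length_cons] at this
        omega
      have hcut : ConnOn G (S.erase x0) := erase_connOn_of_nbrs_in_tail TL hS hTLS huTL hNu
      by_cases hA : ConnOn G (S \ ({x0, v} : Finset V))
      · exact Or.inl ⟨x0, v, p2, hx0S, hvS, hp2S, hp2x0, hp2v, hx0v, Ne.symm hp2x0, h1, h2.symm, hA⟩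
      · right
        have hne : ∃ a ∈ S \ ({x0, v} : Finset V), ∃ b ∈ S \ ({x0, v} : Finset V),
            ¬ WalkIn G (S \ ({x0, v} : Finset V)) a b := by
          by_contra hcon
          push_neg at hcon
          exact hA fun a ha b hb => hcon a ha b hb
        obtain ⟨a, ha, b, hb, hab⟩ := hne
        set S'' := S \ ({x0, v} : Finset V) with hS''
        have hmemS'' : ∀ z, z ∈ S'' ↔ z ∈ S ∧ z ≠ x0 ∧ z ≠ v := by
          intro z
          simp [hS'', Finset.mem_sdiff, Finset.mem_insert, not_or]
        have hp2'' : p2 ∈ S'' := (hmemS'' p2).mpr ⟨hp2S, hp2x0, hp2v⟩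
        have hQ'S'' : ∀ z ∈ Q'.support, z ∈ S'' := by
          intro z hz
          refine (hmemS'' z).mpr ⟨hQ'S z hz, ?_, ?_⟩
          · exact fun h => hx0Q (h ▸ hz)
          · exact fun h => hvQ (h ▸ hz)
        have hc : ∃ c ∈ S'', ¬ WalkIn G S'' c p2 := by
          by_cases h : WalkIn G S'' a p2
          · exact ⟨b, hb, fun h' => hab (h.trans h'.symm)⟩
          · exact ⟨a, ha, h⟩
        obtain ⟨c, hc'', hcp2⟩ := hc
        obtain ⟨hcS, hcx0, hcv⟩ := (hmemS'' c).mp hc''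
        obtain ⟨w0, hw0⟩ := hcut c (Finset.mem_erase.mpr ⟨hcx0, hcS⟩)
          v (Finset.mem_erase.mpr ⟨h1.ne', hvS⟩)
        have hRS : ∀ z ∈ w0.bypass.support, z ∈ S.erase x0 :=
          fun z hz => hw0 z (w0.support_bypass_subset hz)
        set R := w0.bypass with hRdef
        have hRp : R.IsPath := w0.bypass_isPath
        obtain ⟨y, hvy, Wy, hvWy, hWysup⟩ := path_head R.reverse hRp.reverse (Ne.symm hcv)
        have hWyR : ∀ z ∈ Wy.support, z ∈ R.support := by
          intro z hz
          have : z ∈ R.reverse.support := by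
            rw [hWysup]; exact List.mem_cons_of_mem _ hz
          rwa [support_reverse, List.mem_reverse] at this
        have hWyS'' : ∀ z ∈ Wy.support, z ∈ S'' := by
          intro z hz
          have h1z := hRS z (hWyR z hz)
          rw [Finset.mem_erase] at h1z
          exact (hmemS'' z).mpr ⟨h1z.2, h1z.1, fun h => hvWy (h ▸ hz)⟩
        have hy'' : y ∈ S'' := hWyS'' y Wy.start_mem_support
        obtain ⟨hyS, hyx0, hyv⟩ := (hmemS'' y).mp hy''
        have hyc : WalkIn G S'' y c := ⟨Wy, hWyS''⟩
        have hyp2 : ¬ WalkIn G S'' y p2 := fun h => hcp2 (hyc.symm.trans h)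
        have hyQ' : y ∉ Q'.support := by
          intro hmem
          obtain ⟨Z, hZ⟩ := seg Q' hmem Q'.start_mem_support
          exact hyp2 ⟨Z, fun z hz => hQ'S'' z (hZ z hz)⟩
        have hNy : ∀ z ∈ S, G.Adj z y → z = v := by
          intro z hzS hzy
          by_contra hzv
          have hzQ' : z ∉ Q'.support := by
            intro hmem
            obtain ⟨Z, hZ⟩ := seg Q' hmem Q'.start_mem_support
            refine hyp2 ⟨Walk.cons hzy.symm Z, ?_⟩
            intro t ht
            rw [support_cons] at ht
            rcases List.mem_cons.mp ht with rfl | ht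
            · exact hy''
            · exact hQ'S'' t (hZ t ht)
          have hNPp : (Walk.cons hzy (Walk.cons hvy.symm TL)).IsPath := by
            refine ((hTLpath.cons ?_).cons ?_)
            · rw [hsupTL]
              simp only [List.mem_cons]
              rintro (rfl | h)
              · exact hyv rfl
              · exact hyQ' h
            · rw [support_cons, hsupTL]
              simp only [List.mem_cons]
              rintro (rfl | rfl | h)
              · exact hzy.ne rfl
              · exact hzv rfl
              · exact hzQ' h
          have := hPmax z xk _ hNPp (by
            intro t ht
            rw [support_cons, support_cons] at ht
            rcases List.mem_cons.mp ht with rfl | ht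
            · exact hzS
            rcases List.mem_cons.mp ht with rfl | ht
            · exact hyS
            · exact hTLS t ht)
          rw [length_cons, length_cons] at this
          rw [hPlen] at this
          have : TL.length = Q'.length + 1 := by simp [hTLdef, length_cons]
          omega
        have hconnSy : ConnOn G ((S.erase x0).erase y) :=
          erase_connOn_of_unique_nbr hcut
            (fun z hz hadj => hNy z (Finset.mem_of_mem_erase hz) hadj)
        have hset : S \ ({x0, y} : Finset V) = (S.erase x0).erase y := by
          ext z
          simp only [Finset.mem_sdiff, Finset.mem_erase, Finset.mem_insert, Finset.mem_singleton, not_or]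
          tauto
        have hfin : ConnOn G (S \ ({x0, y} : Finset V)) := by
          rw [hset]; exact hconnSy
        exact ⟨x0, y, v, hx0S, hyS, Ne.symm hyx0, hvS, h1.ne', hvy.ne, h1.symm, hvy, hfin⟩

end RubblingAux


namespace RubblingAux

lemma key [Fintype V] [DecidableEq V] (G : SimpleGraph V) :
    ∀ n (S : Finset V), S.card = n → 1 ≤ n → ConnOn G S →
      ∃ p : V → ℕ, (∑ v, p v) ≤ (n + 2) / 2 ∧ ∀ x ∈ S, RubblingReachable G p x := by
  intro n
  induction n using Nat.strong_induction_on with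
  | _ n IH =>
    intro S hcard hn hconn
    by_cases hc1 : S.card = 1
    · obtain ⟨x, hx⟩ := Finset.card_eq_one.mp hc1
      refine ⟨fun z => if z = x then 1 else 0, ?_, ?_⟩
      · have h : (∑ v, if v = x then (1 : ℕ) else 0) = 1 := by
          rw [Finset.sum_ite_eq' Finset.univ x (fun _ => (1 : ℕ))]
          simp
        have hn1 : n = 1 := by omega
        rw [h, hn1]
      · intro t ht
        rw [hx, Finset.mem_singleton] at ht
        exact ⟨_, Relation.ReflTransGen.refl, by simp [ht]⟩
    by_cases hc2 : S.card = 2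
    · obtain ⟨x, y, hxy, hSxy⟩ := Finset.card_eq_two.mp hc2
      have hadj : G.Adj x y := by
        obtain ⟨w, hw⟩ := hconn x (by simp [hSxy]) y (by simp [hSxy])
        have hbp : w.bypass.IsPath := w.bypass_isPath
        have hbS : ∀ z ∈ w.bypass.support, z ∈ S := fun z hz =>
          hw z (w.support_bypass_subset hz)
        cases hq : w.bypass with
        | nil => exact absurd rfl hxy
        | @cons _ c _ hxc Wc =>
          have hcS : c ∈ S := by
            refine hbS c ?_
            rw [hq, SimpleGraph.Walk.support_cons]
            exact List.mem_cons_of_mem _ Wc.start_mem_support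
          have hnd : (SimpleGraph.Walk.cons hxc Wc).support.Nodup := by
            rw [← hq]
            exact (SimpleGraph.Walk.isPath_def _).mp hbp
          rw [SimpleGraph.Walk.support_cons] at hnd
          have hxWc : x ∉ Wc.support := (List.nodup_cons.mp hnd).1
          have hcx : c ≠ x := fun h => hxWc (h ▸ Wc.start_mem_support)
          have hcy : c = y := by
            rw [hSxy] at hcS
            simp only [Finset.mem_insert, Finset.mem_singleton] at hcS
            tauto
          exact hcy ▸ hxc
      refine ⟨fun z => if z = x then 2 else 0, ?_, ?_⟩
      · have h : (∑ v, if v = x then (2 : ℕ) else 0) = 2 := by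
          rw [Finset.sum_ite_eq' Finset.univ x (fun _ => (2 : ℕ))]
          simp
        have hn2 : n = 2 := by omega
        rw [h, hn2]
      · intro t ht
        rw [hSxy] at ht
        simp only [Finset.mem_insert, Finset.mem_singleton] at ht
        rcases ht with rfl | rfl
        · exact ⟨_, Relation.ReflTransGen.refl, by simp⟩
        · exact reach_of_two hadj ⟨_, Relation.ReflTransGen.refl, by simp⟩
    · have h3 : 3 ≤ S.card := by omega
      rcases structural hconn h3 with
        ⟨u, v, w, huS, hvS, hwS, hwu, hwv, huv, huw, hadjuv, hadjwv, hconn'⟩ |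
        ⟨u, y, v, huS, hyS, huy, hvS, hvu, hvy, hadjvu, hadjvy, hconn'⟩
      · -- case (a) : extra pebble on u, reach v by rubbling from u and w
        have hsub : ({u, v} : Finset V) ⊆ S := by
          intro z hz
          simp only [Finset.mem_insert, Finset.mem_singleton] at hz
          rcases hz with rfl | rfl
          · exact huS
          · exact hvS
        have hcard' : (S \ ({u, v} : Finset V)).card = n - 2 := by
          rw [Finset.card_sdiff_of_subset hsub, Finset.card_insert_of_notMem (by simp [huv]),
            Finset.card_singleton]
          omega
        obtain ⟨p'', hsize, hcov⟩ := IH (n - 2) (by omega) _ hcard' (by omega) hconn'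
        refine ⟨fun z => p'' z + (if z = u then 1 else 0), ?_, ?_⟩
        · rw [Finset.sum_add_distrib]
          have h : (∑ z, if z = u then (1 : ℕ) else 0) = 1 := by
            rw [Finset.sum_ite_eq' Finset.univ u (fun _ => (1 : ℕ))]
            simp
          rw [h]
          omega
        · intro x hx
          by_cases hx'' : x ∈ S \ ({u, v} : Finset V)
          · exact reach_add _ (hcov x hx'')
          · have hx2 : x = u ∨ x = v := by
              rw [Finset.mem_sdiff] at hx''
              simp only [Finset.mem_insert, Finset.mem_singleton] at hx''
              tauto
            rcases hx2 with rfl | rfl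
            · exact ⟨_, Relation.ReflTransGen.refl, by simp⟩
            · obtain ⟨q, hq, hqw⟩ := hcov w (Finset.mem_sdiff.mpr ⟨hwS, by
                simp only [Finset.mem_insert, Finset.mem_singleton, not_or]
                exact ⟨hwu, hwv⟩⟩)
              refine reach_of_nbrs huw hadjuv hadjwv
                ⟨fun z => q z + (if z = u then 1 else 0), rtg_add _ hq, by simp, ?_⟩
              show 1 ≤ q w + (if w = u then 1 else 0)
              omega
      · -- case (b) : extra pebble on v, reach u and y by pebbling from v
        have hsub : ({u, y} : Finset V) ⊆ S := by
          intro z hz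
          simp only [Finset.mem_insert, Finset.mem_singleton] at hz
          rcases hz with rfl | rfl
          · exact huS
          · exact hyS
        have hcard' : (S \ ({u, y} : Finset V)).card = n - 2 := by
          rw [Finset.card_sdiff_of_subset hsub, Finset.card_insert_of_notMem (by simp [huy]),
            Finset.card_singleton]
          omega
        obtain ⟨p'', hsize, hcov⟩ := IH (n - 2) (by omega) _ hcard' (by omega) hconn'
        have hvmem : v ∈ S \ ({u, y} : Finset V) := Finset.mem_sdiff.mpr ⟨hvS, by
          simp only [Finset.mem_insert, Finset.mem_singleton, not_or]
          exact ⟨hvu, hvy⟩⟩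
        refine ⟨fun z => p'' z + (if z = v then 1 else 0), ?_, ?_⟩
        · rw [Finset.sum_add_distrib]
          have h : (∑ z, if z = v then (1 : ℕ) else 0) = 1 := by
            rw [Finset.sum_ite_eq' Finset.univ v (fun _ => (1 : ℕ))]
            simp
          rw [h]
          omega
        · intro x hx
          by_cases hx'' : x ∈ S \ ({u, y} : Finset V)
          · exact reach_add _ (hcov x hx'')
          · have hx2 : x = u ∨ x = y := by
              rw [Finset.mem_sdiff] at hx''
              simp only [Finset.mem_insert, Finset.mem_singleton] at hx''
              tauto
            obtain ⟨q, hq, hqv⟩ := hcov v hvmem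
            have hcollect : ∃ q', Relation.ReflTransGen (IsRubblingMove G)
                (fun z => p'' z + (if z = v then 1 else 0)) q' ∧ 2 ≤ q' v := by
              refine ⟨fun z => q z + (if z = v then 1 else 0), rtg_add _ hq, ?_⟩
              show 2 ≤ q v + (if v = v then 1 else 0)
              have hone : (if v = v then (1:ℕ) else 0) = 1 := if_pos rfl
              omega
            rcases hx2 with rfl | rfl
            · exact reach_of_two hadjvu hcollect
            · exact reach_of_two hadjvy hcollect

end RubblingAux

/-- If `G` is a connected graph with `n` vertices, then `ρ_opt(G) ≤ ⌈(n + 1)/2⌉`. -/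
theorem optimalRubblingNumber_le {V : Type*} [Fintype V] (G : SimpleGraph V)
    (hconn : G.Connected) (n : ℕ) (hn : Fintype.card V = n) :
    optimalRubblingNumber G ≤ (n + 1 + 1) / 2 := by
  classical
  haveI hne : Nonempty V := hconn.nonempty
  have h1 : 1 ≤ n := by
    rw [← hn]
    exact Fintype.card_pos
  have heq : (n + 1 + 1) / 2 = (n + 2) / 2 := by omega
  obtain ⟨x0⟩ := hne
  have hconnOn : RubblingAux.ConnOn G Finset.univ := by
    intro a _ b _
    obtain ⟨w⟩ := hconn.preconnected a b
    exact ⟨w, fun z _ => Finset.mem_univ z⟩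
  have hcard : (Finset.univ : Finset V).card = n := by rw [Finset.card_univ, hn]
  obtain ⟨p, hsize, hcov⟩ := RubblingAux.key G n Finset.univ hcard h1 hconnOn
  have hsum : (∑ v, (p v + if v = x0 then (n + 2) / 2 - ∑ v, p v else 0)) = (n + 2) / 2 := by
    rw [Finset.sum_add_distrib]
    have h : (∑ v, if v = x0 then (n + 2) / 2 - ∑ v, p v else 0)
        = (n + 2) / 2 - ∑ v, p v := by
      rw [Finset.sum_ite_eq' Finset.univ x0 (fun _ => (n + 2) / 2 - ∑ v, p v)]
      simp
    rw [h]
    omega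
  have hmem : (n + 2) / 2 ∈
      {k | ∃ p : V → ℕ, (∑ v, p v) = k ∧ ∀ x, RubblingReachable G p x} := by
    refine ⟨fun z => p z + (if z = x0 then (n + 2) / 2 - ∑ v, p v else 0), hsum, fun x => ?_⟩
    exact RubblingAux.reach_add _ (hcov x (Finset.mem_univ x))
  have hle := Nat.sInf_le hmem
  rw [optimalRubblingNumber, heq]
  exact hle
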